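/- Let G be a graph on n vertices with unit edge weights and G^c its complement. Then for every rooted binary tree T with leaves V, cost_G(T) + cost_{G^c}(T) = (n^3 − n)/3. Consequently, a tree maximizes cost_G if and only if it minimizes cost_{G^c}. -/

import Mathlib

open Finset

/-- A rooted binary tree whose leaves are labeled by elements of `Fin n`. -/
inductive HTree (n : ℕ) : Type where
  | leaf : Fin n → HTree n
  | node : HTree n → HTree n → HTree n

namespace HTree

variable {n : ℕ}

/-- The list of leaf labels, left to right. -/
def leafList : HTree n → List (Fin n)
  | .leaf v => [v]
  | .node l r => l.leafList ++ r.leafList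

/-- The set of leaf labels of a tree. -/
def leaves (T : HTree n) : Finset (Fin n) := T.leafList.toFinset

/-- `T` is a hierarchical clustering tree of the whole vertex set `Fin n`:
its leaves are in one-to-one correspondence with `Fin n`. -/
def IsFullTree (T : HTree n) : Prop := T.leafList.Nodup ∧ T.leaves = Finset.univ

/-- `|leaves(T[i ∨ j])|`: the number of leaves of the subtree rooted at the
lowest common ancestor of leaves `i` and `j`. -/
def lcaSize : HTree n → Fin n → Fin n → ℕ
  | .leaf _, _, _ => 1
  | .node l r, i, j =>
    if i ∈ l.leaves ∧ j ∈ l.leaves then l.lcaSize i j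
    else if i ∈ r.leaves ∧ j ∈ r.leaves then r.lcaSize i j
    else (l.leaves ∪ r.leaves).card

/-- `cost_G(T) = Σ_{{i,j}} w_{ij} |leaves(T[i ∨ j])|`, the sum being over
unordered pairs (represented as ordered pairs `p.1 < p.2`). -/
def pairCost (w : Fin n → Fin n → ℝ) (T : HTree n) : ℝ :=
  ∑ p ∈ Finset.univ.filter (fun p : Fin n × Fin n => p.1 < p.2),
    w p.1 p.2 * (T.lcaSize p.1 p.2 : ℝ)

/-- `w(A, B)`: total weight of edges between `A` and `B`. -/
def cut (w : Fin n → Fin n → ℝ) (A B : Finset (Fin n)) : ℝ :=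
  ∑ i ∈ A, ∑ j ∈ B, w i j

/-- The sum-of-splits formulation of the cost:
`Σ over internal splits S → (S₁,S₂) of |S| ⬝ w(S₁,S₂)`. -/
def splitCost (w : Fin n → Fin n → ℝ) : HTree n → ℝ
  | .leaf _ => 0
  | .node l r =>
      ((l.leaves ∪ r.leaves).card : ℝ) * cut w l.leaves r.leaves
        + splitCost w l + splitCost w r

/-- `Subtree t T`: `t` occurs as a subtree of `T`. -/
inductive Subtree : HTree n → HTree n → Prop
  | refl (t : HTree n) : Subtree t t
  | left {t l r : HTree n} : Subtree t l → Subtree t (.node l r)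
  | right {t l r : HTree n} : Subtree t r → Subtree t (.node l r)

end HTree

namespace HTree

variable {n : ℕ}

lemma leaves_node' (l r : HTree n) : (HTree.node l r).leaves = l.leaves ∪ r.leaves := by
  simp [leaves, leafList]

lemma lcaSize_comm' (T : HTree n) (i j : Fin n) : T.lcaSize i j = T.lcaSize j i := by
  induction T with
  | leaf v => rfl
  | node l r ihl ihr =>
    simp only [lcaSize]
    by_cases h1 : i ∈ l.leaves <;> by_cases h2 : j ∈ l.leaves <;>
      by_cases h3 : i ∈ r.leaves <;> by_cases h4 : j ∈ r.leaves <;>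
      simp [h1, h2, h3, h4, ihl, ihr]

lemma sum_offDiag_lcaSize' (T : HTree n) (h : T.leafList.Nodup) :
    ∑ p ∈ T.leaves.offDiag, (T.lcaSize p.1 p.2 : ℝ)
      = 2 * ((T.leaves.card : ℝ) ^ 3 - T.leaves.card) / 3 := by
  induction T with
  | leaf v => simp [leaves, leafList, lcaSize]
  | node l r ihl ihr =>
    rw [leafList, List.nodup_append] at h
    obtain ⟨hl, hr, hlr⟩ := h
    have hdis : Disjoint l.leaves r.leaves := by
      rw [Finset.disjoint_left]
      intro a ha hb
      exact hlr a (List.mem_toFinset.mp ha) a (List.mem_toFinset.mp hb) rfl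
    have hcard : ((l.leaves ∪ r.leaves).card : ℝ) = l.leaves.card + r.leaves.card := by
      rw [Finset.card_union_of_disjoint hdis]; push_cast; ring
    have d1 : Disjoint l.leaves.offDiag r.leaves.offDiag := by
      rw [Finset.disjoint_left]
      intro p hp hq
      rw [Finset.mem_offDiag] at hp hq
      exact Finset.disjoint_left.mp hdis hp.1 hq.1
    have d2 : Disjoint (l.leaves.offDiag ∪ r.leaves.offDiag) (l.leaves ×ˢ r.leaves) := by
      rw [Finset.disjoint_left]
      intro p hp hq
      rw [Finset.mem_product] at hq
      rcases Finset.mem_union.mp hp with h' | h' <;> rw [Finset.mem_offDiag] at h'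
      · exact Finset.disjoint_left.mp hdis h'.2.1 hq.2
      · exact Finset.disjoint_left.mp hdis hq.1 h'.1
    have d3 : Disjoint (l.leaves.offDiag ∪ r.leaves.offDiag ∪ l.leaves ×ˢ r.leaves)
        (r.leaves ×ˢ l.leaves) := by
      rw [Finset.disjoint_left]
      intro p hp hq
      rw [Finset.mem_product] at hq
      rcases Finset.mem_union.mp hp with h' | h'
      · rcases Finset.mem_union.mp h' with h'' | h'' <;> rw [Finset.mem_offDiag] at h''
        · exact Finset.disjoint_left.mp hdis h''.1 hq.1
        · exact Finset.disjoint_left.mp hdis hq.2 h''.2.1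
      · rw [Finset.mem_product] at h'
        exact Finset.disjoint_left.mp hdis h'.1 hq.1
    rw [leaves_node', Finset.offDiag_union hdis, Finset.sum_union d3, Finset.sum_union d2,
      Finset.sum_union d1]
    have e1 : ∑ p ∈ l.leaves.offDiag, ((HTree.node l r).lcaSize p.1 p.2 : ℝ)
        = ∑ p ∈ l.leaves.offDiag, (l.lcaSize p.1 p.2 : ℝ) := by
      refine Finset.sum_congr rfl fun p hp => ?_
      rw [Finset.mem_offDiag] at hp
      simp [lcaSize, hp.1, hp.2.1]
    have e2 : ∑ p ∈ r.leaves.offDiag, ((HTree.node l r).lcaSize p.1 p.2 : ℝ)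
        = ∑ p ∈ r.leaves.offDiag, (r.lcaSize p.1 p.2 : ℝ) := by
      refine Finset.sum_congr rfl fun p hp => ?_
      rw [Finset.mem_offDiag] at hp
      have h1' : p.1 ∉ l.leaves := fun h => Finset.disjoint_left.mp hdis h hp.1
      simp [lcaSize, hp.1, hp.2.1, h1']
    have e3 : ∑ p ∈ l.leaves ×ˢ r.leaves, ((HTree.node l r).lcaSize p.1 p.2 : ℝ)
        = (l.leaves.card : ℝ) * r.leaves.card * ((l.leaves.card : ℝ) + r.leaves.card) := by
      have key : ∀ p ∈ l.leaves ×ˢ r.leaves,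
          ((HTree.node l r).lcaSize p.1 p.2 : ℝ) = ((l.leaves ∪ r.leaves).card : ℝ) := by
        intro p hp
        rw [Finset.mem_product] at hp
        have h1' : p.2 ∉ l.leaves := fun h => Finset.disjoint_left.mp hdis h hp.2
        have h2' : p.1 ∉ r.leaves := fun h => Finset.disjoint_left.mp hdis hp.1 h
        simp [lcaSize, h1', h2']
      rw [Finset.sum_congr rfl key, Finset.sum_const, Finset.card_product, nsmul_eq_mul, hcard]
      push_cast
      ring
    have e4 : ∑ p ∈ r.leaves ×ˢ l.leaves, ((HTree.node l r).lcaSize p.1 p.2 : ℝ)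
        = (r.leaves.card : ℝ) * l.leaves.card * ((l.leaves.card : ℝ) + r.leaves.card) := by
      have key : ∀ p ∈ r.leaves ×ˢ l.leaves,
          ((HTree.node l r).lcaSize p.1 p.2 : ℝ) = ((l.leaves ∪ r.leaves).card : ℝ) := by
        intro p hp
        rw [Finset.mem_product] at hp
        have h1' : p.1 ∉ l.leaves := fun h => Finset.disjoint_left.mp hdis h hp.1
        have h2' : p.2 ∉ r.leaves := fun h => Finset.disjoint_left.mp hdis hp.2 h
        simp [lcaSize, h1', h2']
      rw [Finset.sum_congr rfl key, Finset.sum_const, Finset.card_product, nsmul_eq_mul, hcard]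
      push_cast
      ring
    rw [e1, e2, e3, e4, ihl hl, ihr hr, hcard]
    ring

lemma sum_lt_lcaSize' (T : HTree n) (h : T.IsFullTree) :
    ∑ p ∈ Finset.univ.filter (fun p : Fin n × Fin n => p.1 < p.2), (T.lcaSize p.1 p.2 : ℝ)
      = ((n : ℝ) ^ 3 - n) / 3 := by
  have h2 := sum_offDiag_lcaSize' T h.1
  rw [h.2, Finset.card_univ, Fintype.card_fin] at h2
  have hsplit : (Finset.univ : Finset (Fin n)).offDiag
      = Finset.univ.filter (fun p : Fin n × Fin n => p.1 < p.2)
        ∪ Finset.univ.filter (fun p : Fin n × Fin n => p.2 < p.1) := by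
    ext p
    simp only [Finset.mem_offDiag, Finset.mem_union, Finset.mem_filter, Finset.mem_univ,
      true_and, ne_eq]
    constructor
    · exact fun h => lt_or_gt_of_ne h
    · rintro (h | h)
      exacts [ne_of_lt h, ne_of_gt h]
  have hdisj : Disjoint (Finset.univ.filter (fun p : Fin n × Fin n => p.1 < p.2))
      (Finset.univ.filter (fun p : Fin n × Fin n => p.2 < p.1)) := by
    rw [Finset.disjoint_left]
    intro p hp hq
    rw [Finset.mem_filter] at hp hq
    exact absurd hp.2 (not_lt.mpr hq.2.le)
  have hswap : ∑ p ∈ Finset.univ.filter (fun p : Fin n × Fin n => p.2 < p.1),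
      (T.lcaSize p.1 p.2 : ℝ)
      = ∑ p ∈ Finset.univ.filter (fun p : Fin n × Fin n => p.1 < p.2),
      (T.lcaSize p.1 p.2 : ℝ) := by
    refine Finset.sum_nbij' (fun p => p.swap) (fun p => p.swap) ?_ ?_ ?_ ?_ ?_ <;>
      simp [Finset.mem_filter, lcaSize_comm' T]
  rw [hsplit, Finset.sum_union hdisj, hswap] at h2
  linarith

end HTree

/-- For a unit-weight graph `G` and its complement `G^c`,
`cost_G(T) + cost_{G^c}(T) = (n³ - n)/3` for every full tree `T`; consequently a
tree maximizes `cost_G` (over full trees) iff it minimizes `cost_{G^c}`. -/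
theorem complement_cost (n : ℕ) (G : SimpleGraph (Fin n)) [DecidableRel G.Adj] :
    (∀ T : HTree n, T.IsFullTree →
      T.pairCost (fun i j => if G.Adj i j then 1 else 0)
        + T.pairCost (fun i j => if i ≠ j ∧ ¬ G.Adj i j then 1 else 0)
      = ((n : ℝ) ^ 3 - n) / 3) ∧
    (∀ T₀ : HTree n, T₀.IsFullTree →
      ((∀ T : HTree n, T.IsFullTree →
          T.pairCost (fun i j => if G.Adj i j then 1 else 0)
            ≤ T₀.pairCost (fun i j => if G.Adj i j then 1 else 0)) ↔
       (∀ T : HTree n, T.IsFullTree →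
          T₀.pairCost (fun i j => if i ≠ j ∧ ¬ G.Adj i j then 1 else 0)
            ≤ T.pairCost (fun i j => if i ≠ j ∧ ¬ G.Adj i j then 1 else 0)))) := by
  have key : ∀ T : HTree n, T.IsFullTree →
      T.pairCost (fun i j => if G.Adj i j then 1 else 0)
        + T.pairCost (fun i j => if i ≠ j ∧ ¬ G.Adj i j then 1 else 0)
      = ((n : ℝ) ^ 3 - n) / 3 := by
    intro T hT
    rw [HTree.pairCost, HTree.pairCost, ← Finset.sum_add_distrib, ← T.sum_lt_lcaSize' hT]
    refine Finset.sum_congr rfl fun p hp => ?_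
    rw [Finset.mem_filter] at hp
    have hne : p.1 ≠ p.2 := ne_of_lt hp.2
    by_cases hA : G.Adj p.1 p.2 <;> simp [hA, hne]
  refine ⟨key, fun T₀ hT₀ => ?_⟩
  constructor
  · intro h T hT
    have := key T hT
    have := key T₀ hT₀
    have := h T hT
    linarith
  · intro h T hT
    have := key T hT
    have := key T₀ hT₀
    have := h T hT
    linarith
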